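/- Let 𝒥 be the set of finitely supported multi-indices. If F = Σ_α a_α K_α and G = Σ_β b_β K_β are formal series with ‖F‖²_{-1,-k₁} = Σ_α a_α² (2ℕ)^{-k₁α} < ∞ and ‖G‖²_{-1,-k₂} = Σ_β b_β² (2ℕ)^{-k₂β} < ∞, then the Wick product F◇G = Σ_γ (Σ_{α+β=γ} a_α b_β) K_γ satisfies ‖F◇G‖_{-1,-k} < ∞ for some k (e.g. k = k₁ + k₂ + q for any q with Σ_{α≠0}(2ℕ)^{-qα} < ∞). -/

import Mathlib

/-- `(2ℕ)^{kα} = Π_j (2j)^{k·α_j}` for a finitely supported multi-index `α`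
(coordinates indexed by `j = 1, 2, …`). -/
noncomputable def twoNatPow (k : ℝ) (α : ℕ →₀ ℕ) : ℝ :=
  ∏ j ∈ α.support, ((2 * ((j : ℕ) + 1) : ℝ)) ^ (k * (α j : ℝ))

lemma twoNatPow_pos (k : ℝ) (α : ℕ →₀ ℕ) : 0 < twoNatPow k α := by
  refine Finset.prod_pos fun j _ => Real.rpow_pos_of_pos (by positivity) _

lemma twoNatPow_eq_prod (k : ℝ) (α : ℕ →₀ ℕ) {s : Finset ℕ} (hs : α.support ⊆ s) :
    twoNatPow k α = ∏ j ∈ s, ((2 * ((j : ℕ) + 1) : ℝ)) ^ (k * (α j : ℝ)) := by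
  unfold twoNatPow
  apply Finset.prod_subset hs
  intro j _ hj
  rw [Finsupp.notMem_support_iff.mp hj]
  simp

lemma twoNatPow_add_left (k₁ k₂ : ℝ) (α : ℕ →₀ ℕ) :
    twoNatPow (k₁ + k₂) α = twoNatPow k₁ α * twoNatPow k₂ α := by
  unfold twoNatPow
  rw [← Finset.prod_mul_distrib]
  refine Finset.prod_congr rfl fun j _ => ?_
  rw [add_mul, Real.rpow_add (by positivity)]

lemma twoNatPow_add_right (k : ℝ) (α β : ℕ →₀ ℕ) :
    twoNatPow k (α + β) = twoNatPow k α * twoNatPow k β := by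
  rw [twoNatPow_eq_prod k (α + β) (s := α.support ∪ β.support) Finsupp.support_add,
    twoNatPow_eq_prod k α (s := α.support ∪ β.support) Finset.subset_union_left,
    twoNatPow_eq_prod k β (s := α.support ∪ β.support) Finset.subset_union_right,
    ← Finset.prod_mul_distrib]
  refine Finset.prod_congr rfl fun j _ => ?_
  rw [Finsupp.add_apply, ← Real.rpow_add (by positivity)]
  push_cast
  ring_nf

lemma twoNatPow_le_one {k : ℝ} (hk : k ≤ 0) (α : ℕ →₀ ℕ) : twoNatPow k α ≤ 1 := by
  refine Finset.prod_le_one (fun j _ => (Real.rpow_pos_of_pos (by positivity) _).le)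
    fun j _ => Real.rpow_le_one_of_one_le_of_nonpos (by have : (0 : ℝ) ≤ (j : ℝ) := Nat.cast_nonneg j; push_cast; linarith) ?_
  exact mul_nonpos_of_nonpos_of_nonneg hk (Nat.cast_nonneg _)

lemma card_antidiagonal_le (γ : ℕ →₀ ℕ) :
    ((Finset.HasAntidiagonal.antidiagonal γ).card : ℝ) ≤ twoNatPow 1 γ := by
  have hcard : (Finset.HasAntidiagonal.antidiagonal γ).card ≤ ∏ j ∈ γ.support, (γ j + 1) := by
    have hpi : ∏ j ∈ γ.support, (γ j + 1) =
        (γ.support.pi fun j => Finset.range (γ j + 1)).card := by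
      rw [Finset.card_pi]; simp
    rw [hpi]
    refine Finset.card_le_card_of_injOn (fun p => fun j _ => p.1 j) ?_ ?_
    · intro p hp
      rw [Finset.mem_coe, Finset.HasAntidiagonal.mem_antidiagonal] at hp
      rw [Finset.mem_coe]
      refine Finset.mem_pi.mpr fun j _ => Finset.mem_range.mpr ?_
      have h : p.1 j ≤ γ j := by
        rw [← hp]; simp [Finsupp.add_apply]
      show p.1 j < γ j + 1
      omega
    · intro p hp q hq h
      rw [Finset.mem_coe, Finset.HasAntidiagonal.mem_antidiagonal] at hp hq
      have h1 : p.1 = q.1 := by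
        ext j
        by_cases hj : j ∈ γ.support
        · exact congrFun (congrFun h j) hj
        · have hγ : γ j = 0 := Finsupp.notMem_support_iff.mp hj
          have hpj : p.1 j ≤ γ j := by rw [← hp]; simp [Finsupp.add_apply]
          have hqj : q.1 j ≤ γ j := by rw [← hq]; simp [Finsupp.add_apply]
          omega
      have h2 : p.2 = q.2 := by
        have := hp.trans hq.symm
        rw [h1] at this
        exact add_left_cancel this
      exact Prod.ext h1 h2
  calc ((Finset.HasAntidiagonal.antidiagonal γ).card : ℝ) ≤ (∏ j ∈ γ.support, (γ j + 1) : ℕ) := by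
        exact_mod_cast hcard
    _ ≤ twoNatPow 1 γ := by
        push_cast
        unfold twoNatPow
        refine Finset.prod_le_prod (fun j _ => by positivity) fun j _ => ?_
        rw [one_mul, Real.rpow_natCast]
        calc ((γ j : ℝ) + 1) ≤ 2 ^ (γ j) := by
              exact_mod_cast Nat.lt_two_pow_self (n := γ j)
          _ ≤ (2 * ((j : ℕ) + 1) : ℝ) ^ (γ j) := by
              refine pow_le_pow_left₀ (by norm_num) ?_ _
              have : (0 : ℝ) ≤ (j : ℝ) := Nat.cast_nonneg j
              push_cast
              linarith

/-- The Kondratiev space `(S)_{-1}` is closed under the Wick product: if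
`Σ_α a_α² (2ℕ)^{-k₁α} < ∞` and `Σ_β b_β² (2ℕ)^{-k₂β} < ∞`, then the Wick product
coefficients `c_γ = Σ_{α+β=γ} a_α b_β` satisfy `Σ_γ c_γ² (2ℕ)^{-kγ} < ∞` for some `k`. -/
theorem wick_product_in_kondratiev (a b : (ℕ →₀ ℕ) → ℝ) (k₁ k₂ : ℕ)
    (ha : Summable fun α => a α ^ 2 * twoNatPow (-(k₁ : ℝ)) α)
    (hb : Summable fun β => b β ^ 2 * twoNatPow (-(k₂ : ℝ)) β) :
    ∃ k : ℕ, Summable fun γ : ℕ →₀ ℕ =>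
      (∑ p ∈ Finset.HasAntidiagonal.antidiagonal γ, a p.1 * b p.2) ^ 2 * twoNatPow (-(k : ℝ)) γ := by
  refine ⟨k₁ + k₂ + 1, ?_⟩
  set F : (ℕ →₀ ℕ) × (ℕ →₀ ℕ) → ℝ :=
    fun p => (a p.1 ^ 2 * twoNatPow (-(k₁ : ℝ)) p.1) * (b p.2 ^ 2 * twoNatPow (-(k₂ : ℝ)) p.2)
    with hF
  have hFnonneg : ∀ p, 0 ≤ F p := fun p =>
    mul_nonneg (mul_nonneg (sq_nonneg _) (twoNatPow_pos _ _).le)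
      (mul_nonneg (sq_nonneg _) (twoNatPow_pos _ _).le)
  have hFsum : Summable F :=
    ha.mul_of_nonneg hb (fun α => mul_nonneg (sq_nonneg _) (twoNatPow_pos _ _).le)
      (fun β => mul_nonneg (sq_nonneg _) (twoNatPow_pos _ _).le)
  -- the fiberwise sums of F are summable
  have hGsum : Summable fun γ : ℕ →₀ ℕ => ∑ p ∈ Finset.HasAntidiagonal.antidiagonal γ, F p := by
    refine summable_of_sum_le (c := ∑' p, F p)
      (fun γ => Finset.sum_nonneg fun p _ => hFnonneg p) fun u => ?_
    have hdisj : (u : Set (ℕ →₀ ℕ)).PairwiseDisjoint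
        (fun γ => Finset.HasAntidiagonal.antidiagonal γ) := by
      intro x _ y _ hxy
      refine Finset.disjoint_left.mpr fun p hp hq => ?_
      rw [Finset.HasAntidiagonal.mem_antidiagonal] at hp hq
      exact hxy (hp.symm.trans hq)
    rw [← Finset.sum_biUnion hdisj]
    exact Summable.sum_le_tsum _ (fun p _ => hFnonneg p) hFsum
  refine hGsum.of_nonneg_of_le
    (fun γ => mul_nonneg (sq_nonneg _) (twoNatPow_pos _ _).le) fun γ => ?_
  -- pointwise bound
  have hk : (-(↑(k₁ + k₂ + 1) : ℝ)) = -(1 : ℝ) + (-(k₁ : ℝ) + -(k₂ : ℝ)) := by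
    push_cast; ring
  have hCS : (∑ p ∈ Finset.HasAntidiagonal.antidiagonal γ, a p.1 * b p.2) ^ 2 ≤
      ((Finset.HasAntidiagonal.antidiagonal γ).card : ℝ) *
        ∑ p ∈ Finset.HasAntidiagonal.antidiagonal γ, (a p.1 * b p.2) ^ 2 := by
    exact sq_sum_le_card_mul_sum_sq
  have htw : twoNatPow (-(↑(k₁ + k₂ + 1) : ℝ)) γ =
      twoNatPow (-(1 : ℝ)) γ * (twoNatPow (-(k₁ : ℝ)) γ * twoNatPow (-(k₂ : ℝ)) γ) := by
    rw [hk, twoNatPow_add_left, twoNatPow_add_left]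
  have hpos : (0 : ℝ) < twoNatPow (-(↑(k₁ + k₂ + 1) : ℝ)) γ := twoNatPow_pos _ _
  calc (∑ p ∈ Finset.HasAntidiagonal.antidiagonal γ, a p.1 * b p.2) ^ 2 *
        twoNatPow (-(↑(k₁ + k₂ + 1) : ℝ)) γ
      ≤ (((Finset.HasAntidiagonal.antidiagonal γ).card : ℝ) *
          ∑ p ∈ Finset.HasAntidiagonal.antidiagonal γ, (a p.1 * b p.2) ^ 2) *
          twoNatPow (-(↑(k₁ + k₂ + 1) : ℝ)) γ := by
        exact mul_le_mul_of_nonneg_right hCS hpos.le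
    _ ≤ (twoNatPow 1 γ * ∑ p ∈ Finset.HasAntidiagonal.antidiagonal γ, (a p.1 * b p.2) ^ 2) *
          twoNatPow (-(↑(k₁ + k₂ + 1) : ℝ)) γ := by
        refine mul_le_mul_of_nonneg_right (mul_le_mul_of_nonneg_right
          (card_antidiagonal_le γ)
          (Finset.sum_nonneg fun p _ => sq_nonneg _)) hpos.le
    _ = (∑ p ∈ Finset.HasAntidiagonal.antidiagonal γ, (a p.1 * b p.2) ^ 2) *
          (twoNatPow 1 γ * twoNatPow (-(1 : ℝ)) γ) *
          (twoNatPow (-(k₁ : ℝ)) γ * twoNatPow (-(k₂ : ℝ)) γ) := by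
        rw [htw]; ring
    _ = (∑ p ∈ Finset.HasAntidiagonal.antidiagonal γ, (a p.1 * b p.2) ^ 2) *
          (twoNatPow (-(k₁ : ℝ)) γ * twoNatPow (-(k₂ : ℝ)) γ) := by
        have h0 : twoNatPow 0 γ = 1 := by unfold twoNatPow; simp
        have h01 : twoNatPow 1 γ * twoNatPow (-(1 : ℝ)) γ = 1 := by
          rw [← twoNatPow_add_left, show (1 : ℝ) + -1 = 0 by ring, h0]
        rw [h01, mul_one]
    _ ≤ ∑ p ∈ Finset.HasAntidiagonal.antidiagonal γ, F p := by
        rw [Finset.sum_mul]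
        refine Finset.sum_le_sum fun p hp => ?_
        rw [Finset.HasAntidiagonal.mem_antidiagonal] at hp
        rw [← hp, twoNatPow_add_right, twoNatPow_add_right]
        have e1 : twoNatPow (-(k₁ : ℝ)) p.2 ≤ 1 :=
          twoNatPow_le_one (neg_nonpos.mpr (Nat.cast_nonneg _)) _
        have e2 : twoNatPow (-(k₂ : ℝ)) p.1 ≤ 1 :=
          twoNatPow_le_one (neg_nonpos.mpr (Nat.cast_nonneg _)) _
        have heq : (a p.1 * b p.2) ^ 2 *
            (twoNatPow (-(k₁ : ℝ)) p.1 * twoNatPow (-(k₁ : ℝ)) p.2 *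
              (twoNatPow (-(k₂ : ℝ)) p.1 * twoNatPow (-(k₂ : ℝ)) p.2)) =
            F p * (twoNatPow (-(k₁ : ℝ)) p.2 * twoNatPow (-(k₂ : ℝ)) p.1) := by
          rw [hF]; ring
        rw [heq]
        exact mul_le_of_le_one_right (hFnonneg p)
          (mul_le_one₀ e1 (twoNatPow_pos _ _).le e2)
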